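/- Let V(x) = max(1 - x, 0) be the hinge loss, σ ≥ 0, β > 0, and Z a standard normal random variable. Define φ(r) = E[V(r + σ√r · Z)] and h(r) = φ(r) + β r for r ≥ 0. If σ² < 4 and β < 1, then h admits a unique minimizer r⋆ on [0, ∞), and r⋆ > 0. -/

import Mathlib

open MeasureTheory ProbabilityTheory Real Set Filter Topology

noncomputable def pd (x : ℝ) : ℝ := (Real.sqrt (2 * π))⁻¹ * Real.exp (-x ^ 2 / 2)
noncomputable def Pc (x : ℝ) : ℝ := ∫ t in Set.Iic x, pd t

lemma pd_eq_gauss : pd = gaussianPDFReal 0 1 := by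
  ext x
  simp [pd, gaussianPDFReal]

lemma continuous_pd : Continuous pd := by
  apply Continuous.mul continuous_const
  exact (Continuous.div_const (continuous_pow 2).neg 2).rexp

lemma pd_nonneg (x : ℝ) : 0 ≤ pd x := by
  unfold pd; positivity

lemma pd_pos (x : ℝ) : 0 < pd x := by
  unfold pd
  have := Real.exp_pos (-x ^ 2 / 2)
  have h2 : (0:ℝ) < (Real.sqrt (2 * π))⁻¹ := by
    have : (0:ℝ) < 2 * π := by positivity
    positivity
  positivity

lemma pd_le (x : ℝ) : pd x ≤ (Real.sqrt (2 * π))⁻¹ := by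
  unfold pd
  have h1 : Real.exp (-x ^ 2 / 2) ≤ 1 := by
    rw [Real.exp_le_one_iff]; nlinarith [sq_nonneg x]
  have h2 : (0:ℝ) ≤ (Real.sqrt (2 * π))⁻¹ := by positivity
  nlinarith

lemma integrable_pd : Integrable pd := by
  rw [pd_eq_gauss]; exact ProbabilityTheory.integrable_gaussianPDFReal 0 1

lemma integral_pd : ∫ x, pd x = 1 := by
  rw [pd_eq_gauss]; exact ProbabilityTheory.integral_gaussianPDFReal_eq_one 0 one_ne_zero

lemma hasDerivAt_pd (x : ℝ) : HasDerivAt pd (-x * pd x) x := by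
  have h : HasDerivAt (fun y : ℝ => -y ^ 2 / 2) (-x) x := by
    have := ((hasDerivAt_pow 2 x).neg).div_const 2
    simpa using this.congr_deriv (by ring)
  have := (h.exp).const_mul ((Real.sqrt (2 * π))⁻¹)
  unfold pd
  refine this.congr_deriv ?_
  ring

lemma integrable_id_mul_pd : Integrable (fun x : ℝ => x * pd x) := by
  have h := integrable_rpow_mul_exp_neg_mul_sq (b := (1:ℝ)/2) (by norm_num) (s := 1) (by norm_num)
  simp only [Real.rpow_one] at h
  have h2 : Integrable (fun x : ℝ => x * Real.exp (-x ^ 2 / 2)) := by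
    convert h using 2 with x
    ring_nf
  have h3 := h2.const_mul ((Real.sqrt (2 * π))⁻¹)
  convert h3 using 2 with x
  unfold pd; ring

lemma tendsto_pd_atTop : Tendsto pd atTop (𝓝 0) := by
  have h1 : Tendsto (fun z : ℝ => z ^ 2) atTop atTop := tendsto_pow_atTop two_ne_zero
  have h2 : Tendsto (fun z : ℝ => -z ^ 2 / 2) atTop atBot :=
    (tendsto_neg_atTop_atBot.comp h1).atBot_div_const two_pos
  have h3 := (Real.tendsto_exp_atBot).comp h2
  have h4 := h3.const_mul ((Real.sqrt (2 * π))⁻¹)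
  have goal_eq : pd = fun z : ℝ => (Real.sqrt (2 * π))⁻¹ * Real.exp (-z ^ 2 / 2) := rfl
  rw [goal_eq]
  simpa only [Function.comp_def, mul_zero] using h4

lemma tendsto_pd_atBot : Tendsto pd atBot (𝓝 0) := by
  have := tendsto_pd_atTop.comp tendsto_neg_atBot_atTop
  have he : pd ∘ Neg.neg = pd := by
    funext x; simp only [Function.comp_apply]; unfold pd; rw [neg_sq]
  rwa [he] at this

lemma Pc_eq (x : ℝ) : Pc x = Pc 0 + ∫ t in (0:ℝ)..x, pd t := by
  have h := intervalIntegral.integral_Iic_sub_Iic (f := pd) (a := 0) (b := x) (μ := volume)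
    integrable_pd.integrableOn integrable_pd.integrableOn
  unfold Pc; linarith [h]

lemma hasDerivAt_Pc (x : ℝ) : HasDerivAt Pc (pd x) x := by
  have h : HasDerivAt (fun u => ∫ t in (0:ℝ)..u, pd t) (pd x) x :=
    intervalIntegral.integral_hasDerivAt_right (integrable_pd.intervalIntegrable)
      (continuous_pd.stronglyMeasurableAtFilter _ _) continuous_pd.continuousAt
  have h2 := h.const_add (Pc 0)
  have he : (fun u => Pc 0 + ∫ t in (0:ℝ)..u, pd t) = Pc := by
    funext u; rw [Pc_eq u]
  rwa [he] at h2

lemma tendsto_Pc_atTop : Tendsto Pc atTop (𝓝 1) := by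
  have h := MeasureTheory.tendsto_setIntegral_of_monotone (μ := volume) (f := pd)
    (s := fun x : ℝ => Iic x) (fun i => measurableSet_Iic)
    (fun a b hab => Iic_subset_Iic.mpr hab)
    (by rw [iUnion_Iic]; exact integrable_pd.integrableOn)
  rw [iUnion_Iic, Measure.restrict_univ, integral_pd] at h
  exact h

lemma tendsto_Pc_atBot : Tendsto Pc atBot (𝓝 0) := by
  have h := MeasureTheory.tendsto_setIntegral_of_antitone (μ := volume) (f := pd)
    (s := fun x : ℝ => Iic (-x)) (fun i => measurableSet_Iic)
    (fun a b hab => Iic_subset_Iic.mpr (by linarith))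
    ⟨0, integrable_pd.integrableOn⟩
  have he : (⋂ x : ℝ, Iic (-x)) = (∅ : Set ℝ) := by
    ext y; simp only [mem_iInter, mem_Iic, mem_empty_iff_false, iff_false, not_forall]
    exact ⟨-(y - 1), by push_neg; linarith⟩
  rw [he] at h
  simp only [Measure.restrict_empty, integral_zero_measure] at h
  have h3 := h.comp (tendsto_neg_atBot_atTop)
  have he2 : Pc = ((fun i => ∫ (x : ℝ) in Iic (-i), pd x) ∘ fun x => -x) := by
    funext u; simp [Function.comp, Pc]
  rwa [he2]

lemma Pc_le_one (x : ℝ) : Pc x ≤ 1 := by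
  rw [← integral_pd]
  unfold Pc
  exact setIntegral_le_integral integrable_pd (Filter.Eventually.of_forall pd_nonneg)

lemma Pc_nonneg (x : ℝ) : 0 ≤ Pc x :=
  integral_nonneg pd_nonneg

lemma integral_Iic_mul_pd (a : ℝ) : ∫ z in Iic a, z * pd z = -(pd a) := by
  have h := MeasureTheory.integral_Iic_of_hasDerivAt_of_tendsto'
    (f := fun z => -(pd z)) (f' := fun z => z * pd z) (a := a) (m := 0)
    (fun x _ => by have h := (hasDerivAt_pd x).neg; exact h.congr_deriv (by ring))
    integrable_id_mul_pd.integrableOn (by simpa using tendsto_pd_atBot.neg)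
  rw [h, sub_zero]

lemma integral_gauss (g : ℝ → ℝ) :
    ∫ z, g z ∂(gaussianReal 0 1) = ∫ z, g z * pd z := by
  rw [gaussianReal_of_var_ne_zero 0 one_ne_zero]
  have hmeas : Measurable (fun x => (gaussianPDFReal 0 1 x).toNNReal) :=
    (ProbabilityTheory.measurable_gaussianPDFReal 0 1).real_toNNReal
  have h := integral_withDensity_eq_integral_smul (μ := volume) hmeas g
  have hd : (gaussianPDF 0 1) = (fun x => ((gaussianPDFReal 0 1 x).toNNReal : ENNReal)) := by
    funext x; rfl
  rw [hd, h]
  congr 1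
  funext x
  rw [NNReal.smul_def, smul_eq_mul, Real.coe_toNNReal _ (gaussianPDFReal_nonneg 0 1 x)]
  rw [pd_eq_gauss]; ring
lemma key (σ r : ℝ) (hσ : 0 < σ) (hr : 0 < r) :
    ∫ z, max (1 - (r + σ * Real.sqrt r * z)) 0 ∂(gaussianReal 0 1)
      = (1 - r) * Pc ((1 - r) / (σ * Real.sqrt r))
        + σ * Real.sqrt r * pd ((1 - r) / (σ * Real.sqrt r)) := by
  have hc : 0 < σ * Real.sqrt r := by
    have := Real.sqrt_pos.mpr hr; positivity
  set c := σ * Real.sqrt r with hcdef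
  set a := (1 - r) / c with ha
  rw [integral_gauss]
  have he : ∀ z : ℝ, max (1 - (r + c * z)) 0 * pd z
      = Set.indicator (Iic a) (fun z => (1 - r - c * z) * pd z) z := by
    intro z
    by_cases hz : z ∈ Iic a
    · rw [Set.indicator_of_mem hz]
      have hz' : z ≤ (1 - r) / c := hz
      have h0 : 0 ≤ 1 - (r + c * z) := by
        have h3 := (le_div_iff₀ hc).mp hz'
        nlinarith
      rw [max_eq_left h0]; ring
    · rw [Set.indicator_of_notMem hz]
      simp only [mem_Iic, not_le] at hz
      have h0 : 1 - (r + c * z) ≤ 0 := by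
        have := (div_lt_iff₀ hc).mp hz
        nlinarith
      rw [max_eq_right h0]; ring
  simp_rw [he]
  rw [MeasureTheory.integral_indicator measurableSet_Iic]
  have h1 : IntegrableOn (fun z : ℝ => (1 - r) * pd z) (Iic a) volume :=
    (integrable_pd.const_mul _).integrableOn
  have h2 : IntegrableOn (fun z : ℝ => c * (z * pd z)) (Iic a) volume :=
    (integrable_id_mul_pd.const_mul _).integrableOn
  have he2 : (fun z : ℝ => (1 - r - c * z) * pd z)
      = fun z : ℝ => (1 - r) * pd z - c * (z * pd z) := by
    funext z; ring
  rw [he2, integral_sub h1 h2, integral_const_mul, integral_const_mul, integral_Iic_mul_pd]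
  unfold Pc
  ring

noncomputable def Af (σ r : ℝ) : ℝ := (1 - r) / (σ * Real.sqrt r)
noncomputable def Ff (σ β r : ℝ) : ℝ :=
  (1 - r) * Pc (Af σ r) + σ * Real.sqrt r * pd (Af σ r) + β * r
noncomputable def Gf (σ β r : ℝ) : ℝ :=
  β - Pc (Af σ r) + σ * pd (Af σ r) * (2 * Real.sqrt r)⁻¹

lemma sqrt_sq' {s : ℝ} (hs : 0 < s) : Real.sqrt (s ^ 2) = s := by
  rw [Real.sqrt_sq hs.le]

lemma hasDerivAt_sqrt_sq {s : ℝ} (hs : 0 < s) :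
    HasDerivAt Real.sqrt (1 / (2 * s)) (s ^ 2) := by
  have := Real.hasDerivAt_sqrt (x := s ^ 2) (by positivity)
  rwa [sqrt_sq' hs] at this

lemma hasDerivAt_Af {σ s : ℝ} (hσ : 0 < σ) (hs : 0 < s) :
    HasDerivAt (Af σ) (-(1 + s ^ 2) / (2 * σ * s ^ 3)) (s ^ 2) := by
  have hden : HasDerivAt (fun x : ℝ => σ * Real.sqrt x) (σ * (1 / (2 * s))) (s ^ 2) :=
    (hasDerivAt_sqrt_sq hs).const_mul σ
  have hnum : HasDerivAt (fun x : ℝ => 1 - x) (-1) (s ^ 2) := by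
    simpa using (hasDerivAt_id (s ^ 2)).const_sub 1
  have h := hnum.div hden (by rw [sqrt_sq' hs]; positivity)
  have : Af σ = fun x : ℝ => (1 - x) / (σ * Real.sqrt x) := rfl
  rw [this]
  refine h.congr_deriv ?_
  rw [sqrt_sq' hs]
  field_simp
  try ring

lemma Af_val {σ s : ℝ} (hs : 0 < s) : Af σ (s ^ 2) = (1 - s ^ 2) / (σ * s) := by
  unfold Af; rw [sqrt_sq' hs]

lemma hasDerivAt_Ff {σ β s : ℝ} (hσ : 0 < σ) (hs : 0 < s) :
    HasDerivAt (Ff σ β) (Gf σ β (s ^ 2)) (s ^ 2) := by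
  have tA := hasDerivAt_Af hσ hs
  have tP : HasDerivAt (fun x : ℝ => Pc (Af σ x))
      (pd (Af σ (s ^ 2)) * (-(1 + s ^ 2) / (2 * σ * s ^ 3))) (s ^ 2) :=
    (hasDerivAt_Pc (Af σ (s ^ 2))).comp _ tA
  have t1 : HasDerivAt (fun x : ℝ => 1 - x) (-1) (s ^ 2) := by
    simpa using (hasDerivAt_id (s ^ 2)).const_sub 1
  have term1 := t1.mul tP
  have tsq : HasDerivAt (fun x : ℝ => σ * Real.sqrt x) (σ * (1 / (2 * s))) (s ^ 2) :=
    (hasDerivAt_sqrt_sq hs).const_mul σ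
  have tpd : HasDerivAt (fun x : ℝ => pd (Af σ x))
      ((-(Af σ (s ^ 2)) * pd (Af σ (s ^ 2))) * (-(1 + s ^ 2) / (2 * σ * s ^ 3))) (s ^ 2) :=
    (hasDerivAt_pd (Af σ (s ^ 2))).comp _ tA
  have term2 := tsq.mul tpd
  have term3 : HasDerivAt (fun x : ℝ => β * x) β (s ^ 2) := by
    simpa using (hasDerivAt_id (s ^ 2)).const_mul β
  have total := (term1.add term2).add term3
  have hfe : Ff σ β = fun x : ℝ =>
      (1 - x) * Pc (Af σ x) + σ * Real.sqrt x * pd (Af σ x) + β * x := rfl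
  rw [hfe]
  refine total.congr_deriv ?_
  rw [Gf, sqrt_sq' hs, Af_val hs]
  have hσs : σ * s ≠ 0 := by positivity
  field_simp
  try ring

lemma hasDerivAt_Gf {σ β s : ℝ} (hσ : 0 < σ) (hs : 0 < s) :
    HasDerivAt (Gf σ β)
      (pd (Af σ (s ^ 2)) * ((1 + s ^ 2) ^ 2 - σ ^ 2 * s ^ 2) / (4 * σ * s ^ 5)) (s ^ 2) := by
  have tA := hasDerivAt_Af hσ hs
  have tP : HasDerivAt (fun x : ℝ => Pc (Af σ x))
      (pd (Af σ (s ^ 2)) * (-(1 + s ^ 2) / (2 * σ * s ^ 3))) (s ^ 2) :=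
    (hasDerivAt_Pc (Af σ (s ^ 2))).comp _ tA
  have t1 : HasDerivAt (fun x : ℝ => β - Pc (Af σ x))
      (-(pd (Af σ (s ^ 2)) * (-(1 + s ^ 2) / (2 * σ * s ^ 3)))) (s ^ 2) := tP.const_sub β
  have tpd : HasDerivAt (fun x : ℝ => σ * pd (Af σ x))
      (σ * ((-(Af σ (s ^ 2)) * pd (Af σ (s ^ 2))) * (-(1 + s ^ 2) / (2 * σ * s ^ 3)))) (s ^ 2) :=
    ((hasDerivAt_pd (Af σ (s ^ 2))).comp _ tA).const_mul σ
  have t2s : HasDerivAt (fun x : ℝ => 2 * Real.sqrt x) (2 * (1 / (2 * s))) (s ^ 2) :=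
    (hasDerivAt_sqrt_sq hs).const_mul 2
  have tinv := t2s.inv (by rw [sqrt_sq' hs]; positivity)
  have term2 := tpd.mul tinv
  have total := t1.add term2
  have hge : Gf σ β = fun x : ℝ =>
      (β - Pc (Af σ x)) + (σ * pd (Af σ x)) * (2 * Real.sqrt x)⁻¹ := rfl
  rw [hge]
  refine total.congr_deriv ?_
  simp only [Pi.inv_apply]
  rw [sqrt_sq' hs, Af_val hs]
  have hσs : σ * s ≠ 0 := by positivity
  field_simp
  try ring
lemma tendsto_sqrt_atTop : Tendsto Real.sqrt atTop atTop :=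
  tendsto_atTop_atTop_of_monotone (fun _ _ h => Real.sqrt_le_sqrt h)
    (fun b => ⟨(max b 0) ^ 2, by rw [Real.sqrt_sq (le_max_right b 0)]; exact le_max_left b 0⟩)

lemma tendsto_Af_zero {σ : ℝ} (hσ : 0 < σ) : Tendsto (Af σ) (𝓝[>] (0:ℝ)) atTop := by
  have hden : Tendsto (fun r : ℝ => σ * Real.sqrt r) (𝓝[>] (0:ℝ)) (𝓝[>] (0:ℝ)) := by
    rw [tendsto_nhdsWithin_iff]
    constructor
    · have : Tendsto (fun r : ℝ => σ * Real.sqrt r) (𝓝 (0:ℝ)) (𝓝 (σ * Real.sqrt 0)) :=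
        ((continuous_const.mul Real.continuous_sqrt).tendsto 0)
      simp only [Real.sqrt_zero, mul_zero] at this
      exact this.mono_left nhdsWithin_le_nhds
    · filter_upwards [self_mem_nhdsWithin] with r hr
      have : 0 < Real.sqrt r := Real.sqrt_pos.mpr hr
      exact mul_pos hσ this
  have hinv : Tendsto (fun r : ℝ => (σ * Real.sqrt r)⁻¹) (𝓝[>] (0:ℝ)) atTop :=
    tendsto_inv_nhdsGT_zero.comp hden
  have hnum : Tendsto (fun r : ℝ => 1 - r) (𝓝[>] (0:ℝ)) (𝓝 1) := by
    have : Tendsto (fun r : ℝ => 1 - r) (𝓝 (0:ℝ)) (𝓝 (1 - 0)) :=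
      (continuous_const.sub continuous_id).tendsto 0
    simpa using this.mono_left nhdsWithin_le_nhds
  have := hnum.pos_mul_atTop one_pos hinv
  refine this.congr (fun r => ?_)
  rw [Af, div_eq_mul_inv]

lemma tendsto_Af_atTop {σ : ℝ} (hσ : 0 < σ) : Tendsto (Af σ) atTop atBot := by
  have hminor : Tendsto (fun r : ℝ => -(Real.sqrt r / (2 * σ))) atTop atBot :=
    tendsto_neg_atTop_atBot.comp (_root_.tendsto_sqrt_atTop.atTop_div_const (by positivity))
  refine tendsto_atBot_mono' atTop ?_ hminor
  filter_upwards [eventually_ge_atTop (2:ℝ)] with r hr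
  have hr0 : 0 < r := by linarith
  have hs : 0 < Real.sqrt r := Real.sqrt_pos.mpr hr0
  have hss : Real.sqrt r * Real.sqrt r = r := Real.mul_self_sqrt hr0.le
  rw [Af]
  rw [div_le_iff₀ (by positivity)]
  have expand : -(Real.sqrt r / (2 * σ)) * (σ * Real.sqrt r) = -(r / 2) := by
    field_simp
    nlinarith [hss]
  rw [expand]
  linarith

lemma third_nonneg {σ r : ℝ} (hσ : 0 < σ) :
    0 ≤ σ * pd (Af σ r) * (2 * Real.sqrt r)⁻¹ := by
  have h1 := pd_nonneg (Af σ r)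
  have h2 : (0:ℝ) ≤ (2 * Real.sqrt r)⁻¹ := by positivity
  positivity

lemma tendsto_Gf_atTop {σ β : ℝ} (hσ : 0 < σ) : Tendsto (Gf σ β) atTop (𝓝 β) := by
  have hPc : Tendsto (fun r => Pc (Af σ r)) atTop (𝓝 0) :=
    tendsto_Pc_atBot.comp (tendsto_Af_atTop hσ)
  have hthird : Tendsto (fun r : ℝ => σ * pd (Af σ r) * (2 * Real.sqrt r)⁻¹) atTop (𝓝 0) := by
    have hb : Tendsto (fun r : ℝ => σ * (Real.sqrt (2 * π))⁻¹ * (2 * Real.sqrt r)⁻¹)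
        atTop (𝓝 0) := by
      have h2s : Tendsto (fun r : ℝ => 2 * Real.sqrt r) atTop atTop :=
        _root_.tendsto_sqrt_atTop.const_mul_atTop two_pos
      have := h2s.inv_tendsto_atTop
      have h3 := this.const_mul (σ * (Real.sqrt (2 * π))⁻¹)
      simpa using h3
    refine tendsto_of_tendsto_of_tendsto_of_le_of_le' tendsto_const_nhds hb ?_ ?_
    · exact Eventually.of_forall (fun r => third_nonneg hσ)
    · refine Eventually.of_forall (fun r => ?_)
      have h1 := pd_le (Af σ r)
      have h2 : (0:ℝ) ≤ (2 * Real.sqrt r)⁻¹ := by positivity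
      have h3 : σ * pd (Af σ r) ≤ σ * (Real.sqrt (2 * π))⁻¹ :=
        mul_le_mul_of_nonneg_left h1 hσ.le
      exact mul_le_mul_of_nonneg_right h3 h2
  have hfin : Tendsto (fun r => β - Pc (Af σ r) + σ * pd (Af σ r) * (2 * Real.sqrt r)⁻¹)
      atTop (𝓝 (β - 0 + 0)) := (tendsto_const_nhds.sub hPc).add hthird
  rw [sub_zero, add_zero] at hfin
  exact hfin

lemma exp_sqrt_aux {c : ℝ} (hc : 0 < c) :
    Tendsto (fun u : ℝ => Real.exp (-(c * u)) * Real.sqrt u) atTop (𝓝 0) := by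
  have hb : Tendsto (fun u : ℝ => c⁻¹ * ((c * u) * Real.exp (-(c * u)))) atTop (𝓝 0) := by
    have h1 : Tendsto (fun u : ℝ => c * u) atTop atTop :=
      tendsto_const_mul_atTop_of_pos hc |>.mpr tendsto_id
    have h2 := (tendsto_pow_mul_exp_neg_atTop_nhds_zero 1).comp h1
    simp only [Function.comp_def, pow_one] at h2
    simpa using h2.const_mul c⁻¹
  refine tendsto_of_tendsto_of_tendsto_of_le_of_le' tendsto_const_nhds hb ?_ ?_
  · filter_upwards [eventually_ge_atTop (0:ℝ)] with u hu
    positivity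
  · filter_upwards [eventually_ge_atTop (1:ℝ)] with u hu
    have hu0 : (0:ℝ) ≤ u := by linarith
    have hsq : Real.sqrt u ≤ u := by
      nlinarith [Real.sq_sqrt hu0, Real.sqrt_nonneg u, Real.sqrt_le_sqrt hu]
    have hexp : (0:ℝ) < Real.exp (-(c * u)) := Real.exp_pos _
    calc Real.exp (-(c * u)) * Real.sqrt u ≤ Real.exp (-(c * u)) * u :=
          mul_le_mul_of_nonneg_left hsq hexp.le
      _ = c⁻¹ * ((c * u) * Real.exp (-(c * u))) := by field_simp
lemma tendsto_Gf_zero {σ β : ℝ} (hσ : 0 < σ) :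
    Tendsto (Gf σ β) (𝓝[>] (0:ℝ)) (𝓝 (β - 1)) := by
  have hPc : Tendsto (fun r => Pc (Af σ r)) (𝓝[>] (0:ℝ)) (𝓝 1) :=
    tendsto_Pc_atTop.comp (tendsto_Af_zero hσ)
  have hthird : Tendsto (fun r : ℝ => σ * pd (Af σ r) * (2 * Real.sqrt r)⁻¹)
      (𝓝[>] (0:ℝ)) (𝓝 0) := by
    set k := (Real.sqrt (2 * π))⁻¹ with hk
    have hkpos : 0 < k := by
      rw [hk]
      have h2pi : (0:ℝ) < 2 * π := by positivity
      exact inv_pos.mpr (Real.sqrt_pos.mpr h2pi)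
    set c := ((8:ℝ) * σ ^ 2)⁻¹ with hc
    have hcpos : 0 < c := by rw [hc]; positivity
    have hM : Tendsto (fun r : ℝ => (σ * k / 2) * (Real.exp (-(c * r⁻¹)) * Real.sqrt r⁻¹))
        (𝓝[>] (0:ℝ)) (𝓝 0) := by
      have h1 := (exp_sqrt_aux hcpos).comp tendsto_inv_nhdsGT_zero
      have h2 := h1.const_mul (σ * k / 2)
      simpa [Function.comp_def] using h2
    refine tendsto_of_tendsto_of_tendsto_of_le_of_le' tendsto_const_nhds hM ?_ ?_
    · exact Eventually.of_forall (fun r => third_nonneg hσ)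
    · filter_upwards [Ioo_mem_nhdsGT (by norm_num : (0:ℝ) < 1/2)] with r hr
      obtain ⟨hr0, hr2⟩ := hr
      have hs : 0 < Real.sqrt r := Real.sqrt_pos.mpr hr0
      have hss : Real.sqrt r ^ 2 = r := Real.sq_sqrt hr0.le
      have h1 : (0:ℝ) < σ * Real.sqrt r := by positivity
      have hAf : 1 / (2 * (σ * Real.sqrt r)) ≤ Af σ r := by
        rw [Af, div_le_div_iff₀ (by positivity) h1]
        nlinarith
      have hAfsq : (1 / (2 * (σ * Real.sqrt r))) ^ 2 ≤ (Af σ r) ^ 2 := by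
        apply pow_le_pow_left₀ (by positivity) hAf
      have hval : (1 / (2 * (σ * Real.sqrt r))) ^ 2 = 2 * c * r⁻¹ := by
        rw [hc]
        field_simp
        nlinarith [hss]
      have hexp : Real.exp (-(Af σ r) ^ 2 / 2) ≤ Real.exp (-(c * r⁻¹)) := by
        apply Real.exp_le_exp.mpr
        rw [hval] at hAfsq
        have hrinv : 0 < r⁻¹ := by positivity
        nlinarith
      have hpd : pd (Af σ r) ≤ k * Real.exp (-(c * r⁻¹)) := by
        have : pd (Af σ r) = k * Real.exp (-(Af σ r) ^ 2 / 2) := rfl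
        rw [this]
        exact mul_le_mul_of_nonneg_left hexp hkpos.le
      calc σ * pd (Af σ r) * (2 * Real.sqrt r)⁻¹
          ≤ σ * (k * Real.exp (-(c * r⁻¹))) * (2 * Real.sqrt r)⁻¹ := by
            apply mul_le_mul_of_nonneg_right
              (mul_le_mul_of_nonneg_left hpd hσ.le) (by positivity)
        _ = σ * k / 2 * (Real.exp (-(c * r⁻¹)) * Real.sqrt r⁻¹) := by
            rw [Real.sqrt_inv]
            field_simp
  have hfin : Tendsto (fun r => β - Pc (Af σ r) + σ * pd (Af σ r) * (2 * Real.sqrt r)⁻¹)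
      (𝓝[>] (0:ℝ)) (𝓝 (β - 1 + 0)) := (tendsto_const_nhds.sub hPc).add hthird
  rw [add_zero] at hfin
  exact hfin

lemma tendsto_Ff_zero {σ β : ℝ} (hσ : 0 < σ) :
    Tendsto (Ff σ β) (𝓝[>] (0:ℝ)) (𝓝 1) := by
  have hA := tendsto_Af_zero hσ
  have hPc : Tendsto (fun r => Pc (Af σ r)) (𝓝[>] (0:ℝ)) (𝓝 1) := tendsto_Pc_atTop.comp hA
  have hnum : Tendsto (fun r : ℝ => 1 - r) (𝓝[>] (0:ℝ)) (𝓝 1) := by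
    have : Tendsto (fun r : ℝ => 1 - r) (𝓝 (0:ℝ)) (𝓝 (1 - 0)) :=
      (continuous_const.sub continuous_id).tendsto 0
    simpa using this.mono_left nhdsWithin_le_nhds
  have h1 := hnum.mul hPc
  have hpd : Tendsto (fun r => pd (Af σ r)) (𝓝[>] (0:ℝ)) (𝓝 0) := tendsto_pd_atTop.comp hA
  have hsr : Tendsto (fun r : ℝ => σ * Real.sqrt r) (𝓝[>] (0:ℝ)) (𝓝 0) := by
    have : Tendsto (fun r : ℝ => σ * Real.sqrt r) (𝓝 (0:ℝ)) (𝓝 (σ * Real.sqrt 0)) :=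
      (continuous_const.mul Real.continuous_sqrt).tendsto 0
    simp only [Real.sqrt_zero, mul_zero] at this
    exact this.mono_left nhdsWithin_le_nhds
  have h2 := hsr.mul hpd
  have h3 : Tendsto (fun r : ℝ => β * r) (𝓝[>] (0:ℝ)) (𝓝 0) := by
    have : Tendsto (fun r : ℝ => β * r) (𝓝 (0:ℝ)) (𝓝 (β * 0)) :=
      (continuous_const.mul continuous_id).tendsto 0
    simp only [mul_zero] at this
    exact this.mono_left nhdsWithin_le_nhds
  have hfin := (h1.add h2).add h3
  simp only [one_mul, mul_zero, zero_mul, add_zero] at hfin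
  exact hfin

lemma hasDerivAt_Ff' {σ β r : ℝ} (hσ : 0 < σ) (hr : 0 < r) :
    HasDerivAt (Ff σ β) (Gf σ β r) r := by
  have hs : 0 < Real.sqrt r := Real.sqrt_pos.mpr hr
  have h := hasDerivAt_Ff (β := β) hσ hs
  rwa [Real.sq_sqrt hr.le] at h

lemma deriv_Gf_pos {σ β r : ℝ} (hσ : 0 < σ) (hσ2 : σ ^ 2 < 4) (hr : 0 < r) :
    0 < deriv (Gf σ β) r := by
  have hs : 0 < Real.sqrt r := Real.sqrt_pos.mpr hr
  have h := hasDerivAt_Gf (β := β) hσ hs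
  rw [Real.sq_sqrt hr.le] at h
  rw [h.deriv]
  have hnum : 0 < (1 + r) ^ 2 - σ ^ 2 * r := by nlinarith [sq_nonneg (1 - r)]
  have hpd := pd_pos (Af σ r)
  positivity

lemma hasDerivAt_Gf' {σ β r : ℝ} (hσ : 0 < σ) (hr : 0 < r) :
    ∃ d, HasDerivAt (Gf σ β) d r := by
  have hs : 0 < Real.sqrt r := Real.sqrt_pos.mpr hr
  have h := hasDerivAt_Gf (β := β) hσ hs
  rw [Real.sq_sqrt hr.le] at h
  exact ⟨_, h⟩

lemma Gf_strictMono {σ β : ℝ} (hσ : 0 < σ) (hσ2 : σ ^ 2 < 4) :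
    StrictMonoOn (Gf σ β) (Ioi 0) := by
  apply strictMonoOn_of_deriv_pos (convex_Ioi 0)
  · intro x hx
    obtain ⟨d, hd⟩ := hasDerivAt_Gf' (β := β) hσ hx
    exact hd.continuousAt.continuousWithinAt
  · rw [interior_Ioi]
    intro x hx
    exact deriv_Gf_pos hσ hσ2 hx
/-- for the hinge loss `V(x) = max(1-x,0)`, `σ ≥ 0` with `σ² < 4`
and `0 < β < 1`, the function `h(r) = E[V(r + σ√r Z)] + βr` on `[0,∞)` has a
unique minimizer `r⋆`, and `r⋆ > 0`. -/
theorem stmt1 (σ β : ℝ) (hσ : 0 ≤ σ) (hσ2 : σ ^ 2 < 4) (hβ0 : 0 < β) (hβ1 : β < 1)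
    (h : ℝ → ℝ)
    (hh : ∀ r, 0 ≤ r → h r =
      (∫ z, max (1 - (r + σ * Real.sqrt r * z)) 0 ∂(gaussianReal 0 1)) + β * r) :
    ∃ rs : ℝ, 0 < rs ∧ (∀ r, 0 ≤ r → h rs ≤ h r) ∧
      ∀ r, 0 ≤ r → (∀ r', 0 ≤ r' → h r ≤ h r') → r = rs := by
  rcases hσ.eq_or_lt with hσ0 | hσpos
  · -- σ = 0 case
    subst hσ0
    have hh' : ∀ r, 0 ≤ r → h r = max (1 - r) 0 + β * r := by
      intro r hr
      rw [hh r hr]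
      congr 1
      have he : (fun z : ℝ => max (1 - (r + 0 * Real.sqrt r * z)) 0)
          = fun _ : ℝ => max (1 - r) 0 := by
        funext z; norm_num
      calc ∫ z, max (1 - (r + 0 * Real.sqrt r * z)) 0 ∂(gaussianReal 0 1)
          = ∫ _, max (1 - r) 0 ∂(gaussianReal 0 1) := by rw [he]
        _ = max (1 - r) 0 := by simp
    refine ⟨1, one_pos, ?_, ?_⟩
    · intro r hr
      rw [hh' 1 zero_le_one, hh' r hr]
      norm_num
      rcases le_or_gt r 1 with h1 | h1
      · rw [max_eq_left (by linarith)]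
        nlinarith
      · rw [max_eq_right (by linarith)]
        nlinarith
    · intro r hr hmin
      have h1 := hmin 1 zero_le_one
      rw [hh' 1 zero_le_one, hh' r hr] at h1
      norm_num at h1
      by_contra hne
      rcases le_or_gt r 1 with hle | hgt
      · rw [max_eq_left (by linarith)] at h1
        have hrlt : r < 1 := lt_of_le_of_ne hle hne
        nlinarith
      · rw [max_eq_right (by linarith)] at h1
        nlinarith
  · -- σ > 0 case
    have hFh : ∀ r : ℝ, 0 < r → h r = Ff σ β r := by
      intro r hr
      rw [hh r hr.le, key σ r hσpos hr]
      rfl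
    have hh0 : h 0 = 1 := by
      rw [hh 0 le_rfl]
      have he : (fun z : ℝ => max (1 - ((0:ℝ) + σ * Real.sqrt 0 * z)) 0)
          = fun _ : ℝ => (1:ℝ) := by
        funext z; simp [Real.sqrt_zero]
      calc (∫ z, max (1 - ((0:ℝ) + σ * Real.sqrt 0 * z)) 0 ∂(gaussianReal 0 1)) + β * 0
          = (∫ _, (1:ℝ) ∂(gaussianReal 0 1)) + β * 0 := by rw [he]
        _ = 1 := by simp
    have hGmono := Gf_strictMono (β := β) hσpos hσ2
    obtain ⟨r₀, hG0, hr₀⟩ :=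
      (((tendsto_Gf_zero (β := β) hσpos).eventually_lt_const
        (show β - 1 < 0 by linarith)).and self_mem_nhdsWithin).exists
    obtain ⟨r₁, hG1, hr₁⟩ :=
      (((tendsto_Gf_atTop (β := β) hσpos).eventually_const_lt hβ0).and
        (eventually_gt_atTop r₀)).exists
    have hr₀pos : (0:ℝ) < r₀ := hr₀
    have hsub : Icc r₀ r₁ ⊆ Ioi (0:ℝ) := fun x hx => lt_of_lt_of_le hr₀pos hx.1
    have hcont : ContinuousOn (Gf σ β) (Icc r₀ r₁) := fun x hx =>
      ((hasDerivAt_Gf' (β := β) hσpos (hsub hx)).choose_spec).continuousAt.continuousWithinAt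
    have h0mem : (0:ℝ) ∈ Ioo (Gf σ β r₀) (Gf σ β r₁) := ⟨hG0, hG1⟩
    obtain ⟨rs, hrsIoo, hGrs⟩ := intermediate_value_Ioo hr₁.le hcont h0mem
    have hrs0 : 0 < rs := lt_trans hr₀pos hrsIoo.1
    have hGneg : ∀ x, 0 < x → x < rs → Gf σ β x < 0 := by
      intro x hx hxrs
      have := hGmono (mem_Ioi.mpr hx) (mem_Ioi.mpr hrs0) hxrs
      rwa [hGrs] at this
    have hGpos : ∀ x, rs < x → 0 < Gf σ β x := by
      intro x hx
      have := hGmono (mem_Ioi.mpr hrs0) (mem_Ioi.mpr (lt_trans hrs0 hx)) hx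
      rwa [hGrs] at this
    have hFanti : StrictAntiOn (Ff σ β) (Ioc 0 rs) := by
      apply strictAntiOn_of_deriv_neg (convex_Ioc 0 rs)
      · intro x hx
        exact (hasDerivAt_Ff' (β := β) hσpos hx.1).continuousAt.continuousWithinAt
      · rw [interior_Ioc]
        intro x hx
        rw [(hasDerivAt_Ff' (β := β) hσpos hx.1).deriv]
        exact hGneg x hx.1 hx.2
    have hFmono : StrictMonoOn (Ff σ β) (Ici rs) := by
      apply strictMonoOn_of_deriv_pos (convex_Ici rs)
      · intro x hx
        exact (hasDerivAt_Ff' (β := β) hσpos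
          (lt_of_lt_of_le hrs0 hx)).continuousAt.continuousWithinAt
      · rw [interior_Ici]
        intro x hx
        rw [(hasDerivAt_Ff' (β := β) hσpos (lt_trans hrs0 hx)).deriv]
        exact hGpos x hx
    have hFle1 : ∀ x, 0 < x → x ≤ rs → Ff σ β x < 1 := by
      intro x hx hxrs
      have hhalf : x / 2 ∈ Ioc (0:ℝ) rs := ⟨by linarith, by linarith⟩
      have h1 : Ff σ β x < Ff σ β (x / 2) := hFanti hhalf ⟨hx, hxrs⟩ (by linarith)
      have h2 : Ff σ β (x / 2) ≤ 1 := by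
        apply ge_of_tendsto (tendsto_Ff_zero (β := β) hσpos)
        filter_upwards [Ioo_mem_nhdsGT (show (0:ℝ) < x / 2 by linarith)] with z hz
        exact (hFanti ⟨hz.1, by linarith [hz.2]⟩ hhalf hz.2).le
      linarith
    have hstrict : ∀ r, 0 ≤ r → r ≠ rs → h rs < h r := by
      intro r hr hne
      rcases hr.eq_or_lt with heq | hrpos
      · rw [← heq, hh0, hFh rs hrs0]
        exact hFle1 rs hrs0 le_rfl
      · rw [hFh r hrpos, hFh rs hrs0]
        rcases lt_or_gt_of_ne hne with hlt | hgt
        · exact hFanti ⟨hrpos, hlt.le⟩ ⟨hrs0, le_rfl⟩ hlt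
        · exact hFmono self_mem_Ici (mem_Ici.mpr hgt.le) hgt
    refine ⟨rs, hrs0, ?_, ?_⟩
    · intro r hr
      rcases eq_or_ne r rs with rfl | hne
      · exact le_rfl
      · exact (hstrict r hr hne).le
    · intro r hr hmin
      by_contra hne
      exact absurd (hmin rs hrs0.le) (not_le.mpr (hstrict r hr hne))
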